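/- arXiv:1607.08001 — 3 statements merged into one kernel-verified Lean document; each statement's English description precedes it below -/
import Mathlib

section
/- For k ∈ (0,1) with K = K(k), K' = K(√(1−k²)), the integral ∫_ℝ |x|ⁿ dx/(cos(√x·K) + cosh(√x·K')) is finite for every integer n ≥ 0. -/
open Real MeasureTheory

noncomputable def ellK (k : ℝ) : ℝ :=
  ∫ θ in (0:ℝ)..(π/2), 1 / Real.sqrt (1 - k^2 * Real.sin θ^2)

noncomputable def jacobiNome (k : ℝ) : ℝ :=
  Real.exp (-π * ellK (Real.sqrt (1 - k^2)) / ellK k)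

noncomputable def theta1 (z : ℂ) (q : ℝ) : ℂ :=
  2 * ∑' n : ℕ, (-1 : ℂ) ^ n * ((q ^ (((n : ℝ) + 1/2)^2) : ℝ) : ℂ) *
    Complex.sin ((2 * n + 1) * z)

noncomputable def theta2 (z : ℂ) (q : ℝ) : ℂ :=
  2 * ∑' n : ℕ, ((q ^ (((n : ℝ) + 1/2)^2) : ℝ) : ℂ) * Complex.cos ((2 * n + 1) * z)

noncomputable def theta3 (z : ℂ) (q : ℝ) : ℂ :=
  1 + 2 * ∑' n : ℕ, ((q ^ (((n : ℝ) + 1)^2) : ℝ) : ℂ) * Complex.cos (2 * ((n : ℂ) + 1) * z)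

noncomputable def theta4 (z : ℂ) (q : ℝ) : ℂ :=
  1 + 2 * ∑' n : ℕ, (-1 : ℂ) ^ (n + 1) * ((q ^ (((n : ℝ) + 1)^2) : ℝ) : ℂ) *
    Complex.cos (2 * ((n : ℂ) + 1) * z)

noncomputable def sn (u : ℂ) (k : ℝ) : ℂ :=
  (theta3 0 (jacobiNome k) / theta2 0 (jacobiNome k)) *
    (theta1 (π * u / (2 * ellK k)) (jacobiNome k) /
      theta4 (π * u / (2 * ellK k)) (jacobiNome k))

noncomputable def cn (u : ℂ) (k : ℝ) : ℂ :=
  (theta4 0 (jacobiNome k) / theta2 0 (jacobiNome k)) *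
    (theta2 (π * u / (2 * ellK k)) (jacobiNome k) /
      theta4 (π * u / (2 * ellK k)) (jacobiNome k))

noncomputable def dn (u : ℂ) (k : ℝ) : ℂ :=
  (theta4 0 (jacobiNome k) / theta3 0 (jacobiNome k)) *
    (theta3 (π * u / (2 * ellK k)) (jacobiNome k) /
      theta4 (π * u / (2 * ellK k)) (jacobiNome k))

noncomputable def cd (u : ℂ) (k : ℝ) : ℂ := cn u k / dn u k

noncomputable def mysteryDen (K K' x : ℝ) : ℝ :=
  if 0 ≤ x then Real.cos (Real.sqrt x * K) + Real.cosh (Real.sqrt x * K')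
  else Real.cosh (Real.sqrt (-x) * K) + Real.cos (Real.sqrt (-x) * K')

lemma ellK_ge (k : ℝ) (hk : k^2 < 1) : π/2 ≤ ellK k := by
  have hπ : (0:ℝ) ≤ π/2 := by positivity
  have hpos : ∀ θ : ℝ, 0 < 1 - k^2 * Real.sin θ^2 := by
    intro θ
    nlinarith [Real.sin_sq_le_one θ, sq_nonneg k, sq_nonneg (Real.sin θ)]
  have hcont : ContinuousOn (fun θ => 1 / Real.sqrt (1 - k^2 * Real.sin θ^2))
      (Set.uIcc 0 (π/2)) := by
    apply ContinuousOn.div continuousOn_const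
    · fun_prop
    · intro θ _
      exact (Real.sqrt_pos.2 (hpos θ)).ne'
  have hii := hcont.intervalIntegrable (μ := volume)
  have hmono := intervalIntegral.integral_mono_on hπ (intervalIntegrable_const (c := (1:ℝ))) hii
    (fun θ _ => by
      rw [le_div_iff₀ (Real.sqrt_pos.2 (hpos θ)), one_mul]
      exact Real.sqrt_le_one.2 (by nlinarith [sq_nonneg k, sq_nonneg (Real.sin θ)]))
  have : ∫ _θ in (0:ℝ)..(π/2), (1:ℝ) = π/2 := by simp
  rw [this] at hmono
  exact hmono

lemma aux_cosh_sq {t : ℝ} (ht : 0 ≤ t) : t^2/2 ≤ Real.cosh t - 1 := by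
  have h1 : Real.cosh t = 2 * Real.sinh (t/2)^2 + 1 := by
    have h := Real.cosh_two_mul (t/2)
    have h2 := Real.cosh_sq (t/2)
    rw [show 2*(t/2) = t by ring] at h
    rw [h, h2]; ring
  have h3 : t/2 ≤ Real.sinh (t/2) := Real.self_le_sinh_iff.2 (by linarith)
  nlinarith

lemma aux_cosh_large {t : ℝ} (ht : 2 ≤ t) (s : ℕ) :
    t^s / (4 * (Nat.factorial s)) ≤ Real.cosh t - 1 := by
  have he1 : (2:ℝ) ≤ Real.exp 1 := by
    have := Real.exp_one_gt_d9; linarith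
  have he4 : (4:ℝ) ≤ Real.exp t := by
    calc (4:ℝ) = 2 * 2 := by norm_num
    _ ≤ Real.exp 1 * Real.exp 1 := by nlinarith
    _ = Real.exp 2 := by rw [← Real.exp_add]; norm_num
    _ ≤ Real.exp t := Real.exp_le_exp.2 ht
  have hmon : t^s / (Nat.factorial s) ≤ Real.exp t := Real.pow_div_factorial_le_exp (x := t) (by linarith) s
  have hcosh : Real.cosh t = (Real.exp t + Real.exp (-t))/2 := Real.cosh_eq t
  have hexpneg : 0 < Real.exp (-t) := Real.exp_pos _
  have hfac : (0:ℝ) < (Nat.factorial s) := by positivity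
  have : t^s / (4 * (Nat.factorial s)) = (t^s / (Nat.factorial s)) / 4 := by ring
  rw [this, hcosh]
  nlinarith

lemma den_lower (K K' : ℝ) (m : ℝ) (hm : m = min K K') (hm0 : 0 ≤ m) (x : ℝ) :
    Real.cosh (Real.sqrt |x| * m) - 1 ≤ mysteryDen K K' x := by
  unfold mysteryDen
  split_ifs with h
  · rw [abs_of_nonneg h]
    have h1 : Real.cosh (Real.sqrt x * m) ≤ Real.cosh (Real.sqrt x * K') := by
      rw [Real.cosh_le_cosh, abs_of_nonneg (by positivity),
        abs_of_nonneg (mul_nonneg (Real.sqrt_nonneg x) (le_trans hm0 (hm ▸ min_le_right K K')))]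
      exact mul_le_mul_of_nonneg_left (hm ▸ min_le_right K K') (Real.sqrt_nonneg x)
    have h2 := Real.neg_one_le_cos (Real.sqrt x * K)
    linarith
  · rw [abs_of_neg (lt_of_not_ge h)]
    have h1 : Real.cosh (Real.sqrt (-x) * m) ≤ Real.cosh (Real.sqrt (-x) * K) := by
      rw [Real.cosh_le_cosh, abs_of_nonneg (by positivity),
        abs_of_nonneg (mul_nonneg (Real.sqrt_nonneg (-x)) (le_trans hm0 (hm ▸ min_le_left K K')))]
      exact mul_le_mul_of_nonneg_left (hm ▸ min_le_left K K') (Real.sqrt_nonneg (-x))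
    have h2 := Real.neg_one_le_cos (Real.sqrt (-x) * K')
    linarith

lemma den_lower_small (K K' : ℝ) (M : ℝ) (hM : M = max K K') (hK0 : 0 ≤ K) (hK'0 : 0 ≤ K')
    (x : ℝ) (hx : |x| * M^2 ≤ 1) : (1:ℝ) ≤ mysteryDen K K' x := by
  unfold mysteryDen
  split_ifs with h
  · have hx' : x * M^2 ≤ 1 := by rwa [abs_of_nonneg h] at hx
    have h1 : 1 - (Real.sqrt x * K)^2/2 ≤ Real.cos (Real.sqrt x * K) :=
      Real.one_sub_sq_div_two_le_cos
    have h2 : (Real.sqrt x * K)^2 = x * K^2 := by rw [mul_pow, Real.sq_sqrt h]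
    have hKM : K ≤ M := hM ▸ le_max_left K K'
    have h3 : x * K^2 ≤ 1 := by nlinarith [mul_le_mul_of_nonneg_left (sq_le_sq' (by linarith) hKM) h]
    have h4 := Real.one_le_cosh (Real.sqrt x * K')
    linarith
  · have hxneg : 0 ≤ -x := by linarith [lt_of_not_ge h]
    have hx' : (-x) * M^2 ≤ 1 := by rwa [abs_of_neg (lt_of_not_ge h)] at hx
    have h1 : 1 - (Real.sqrt (-x) * K')^2/2 ≤ Real.cos (Real.sqrt (-x) * K') :=
      Real.one_sub_sq_div_two_le_cos
    have h2 : (Real.sqrt (-x) * K')^2 = (-x) * K'^2 := by rw [mul_pow, Real.sq_sqrt hxneg]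
    have hKM : K' ≤ M := hM ▸ le_max_right K K'
    have h3 : (-x) * K'^2 ≤ 1 := by
      nlinarith [mul_le_mul_of_nonneg_left (sq_le_sq' (by linarith) hKM) hxneg]
    have h4 := Real.one_le_cosh (Real.sqrt (-x) * K)
    linarith


set_option maxHeartbeats 1000000 in
theorem mystery_moments_integrable (k : ℝ) (hk : k ∈ Set.Ioo (0:ℝ) 1)
    (K K' : ℝ) (hK : K = ellK k) (hK' : K' = ellK (Real.sqrt (1 - k^2)))
    (n : ℕ) :
    MeasureTheory.Integrable (fun x : ℝ => |x| ^ n / mysteryDen K K' x) := by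
  obtain ⟨hk0, hk1⟩ := hk
  have hkk : k^2 < 1 := by nlinarith
  have hπ : (3:ℝ) < π := Real.pi_gt_three
  have hKge : π/2 ≤ K := by rw [hK]; exact ellK_ge k hkk
  have hK'ge : π/2 ≤ K' := by
    rw [hK']
    apply ellK_ge
    rw [Real.sq_sqrt (by nlinarith : (0:ℝ) ≤ 1 - k^2)]
    nlinarith
  set m := min K K' with hm
  set M := max K K' with hM
  have hm1 : (1:ℝ) ≤ m := le_min (by linarith) (by linarith)
  have hmM : m ≤ M := min_le_max
  have hM1 : (1:ℝ) ≤ M := hm1.trans hmM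
  have hm0 : (0:ℝ) < m := by linarith
  have hM0 : (0:ℝ) < M := by linarith
  set s : ℕ := 2*n + 4 with hs
  -- lower bound through aux_cosh_sq : den ≥ |x| * m^2 / 2
  have hden2 : ∀ x : ℝ, |x| * m^2 / 2 ≤ mysteryDen K K' x := by
    intro x
    have h1 := den_lower K K' m hm hm0.le x
    have h2 := aux_cosh_sq (t := Real.sqrt |x| * m) (by positivity)
    have h3 : (Real.sqrt |x| * m)^2 = |x| * m^2 := by
      rw [mul_pow, Real.sq_sqrt (abs_nonneg x)]
    rw [h3] at h2
    linarith
  have hdenpos : ∀ x : ℝ, 0 < mysteryDen K K' x := by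
    intro x
    rcases le_or_gt (|x| * M^2) 1 with hA | hA
    · linarith [den_lower_small K K' M hM (by linarith) (by linarith) x hA]
    · have hx0 : 0 < |x| := by nlinarith [abs_nonneg x]
      have := hden2 x
      nlinarith
  -- the key polynomial bound
  obtain ⟨C, hC⟩ : ∃ C : ℝ, ∀ x : ℝ, |x|^n * (1 + x^2) ≤ C * mysteryDen K K' x := by
    set cB : ℝ := 4^n * 17 * (2 * M^2 / m^2) with hcB
    set cC : ℝ := ((16 + m^4)/16) * (4 * (Nat.factorial s) / m^s) with hcC
    refine ⟨max 2 (max cB cC), fun x => ?_⟩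
    have hden0 : 0 ≤ mysteryDen K K' x := (hdenpos x).le
    have hcB0 : 0 ≤ cB := by positivity
    have hcC0 : 0 ≤ cC := by positivity
    rcases le_or_gt (|x| * M^2) 1 with hA | hA
    · -- small region
      have hx1 : |x| ≤ 1 := by
        nlinarith [mul_nonneg (abs_nonneg x) (by nlinarith : (0:ℝ) ≤ M^2 - 1)]
      have h1 : |x|^n ≤ 1 := pow_le_one₀ (abs_nonneg x) hx1
      have h2 : x^2 ≤ 1 := by nlinarith [sq_abs x, abs_nonneg x]
      have hLHS : |x|^n * (1 + x^2) ≤ 2 := by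
        nlinarith [pow_nonneg (abs_nonneg x) n, sq_nonneg x]
      have hden1' := den_lower_small K K' M hM (by linarith) (by linarith) x hA
      calc |x|^n * (1 + x^2) ≤ 2 * mysteryDen K K' x := by nlinarith
      _ ≤ max 2 (max cB cC) * mysteryDen K K' x :=
          mul_le_mul_of_nonneg_right (le_max_left _ _) hden0
    rcases le_or_gt (|x| * m^2) 4 with hB | hB
    · -- middle region
      have hx4 : |x| ≤ 4 := by
        nlinarith [mul_nonneg (abs_nonneg x) (by nlinarith : (0:ℝ) ≤ m^2 - 1)]
      have h1 : |x|^n ≤ 4^n := pow_le_pow_left₀ (abs_nonneg x) hx4 n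
      have h2 : 1 + x^2 ≤ 17 := by nlinarith [sq_abs x, abs_nonneg x]
      have hLHS : |x|^n * (1 + x^2) ≤ 4^n * 17 := by
        have := mul_le_mul h1 h2 (by positivity) (by positivity)
        linarith
      have hdenB : m^2 / (2 * M^2) ≤ mysteryDen K K' x := by
        refine le_trans ?_ (hden2 x)
        rw [div_le_div_iff₀ (by positivity) (by positivity)]
        nlinarith
      have hkey : cB * (m^2 / (2 * M^2)) = 4^n * 17 := by
        rw [hcB]; field_simp
      calc |x|^n * (1 + x^2) ≤ 4^n * 17 := hLHS
      _ = cB * (m^2 / (2 * M^2)) := hkey.symm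
      _ ≤ cB * mysteryDen K K' x := mul_le_mul_of_nonneg_left hdenB hcB0
      _ ≤ max 2 (max cB cC) * mysteryDen K K' x :=
          mul_le_mul_of_nonneg_right ((le_max_left cB cC).trans (le_max_right _ _)) hden0
    · -- large region
      set t : ℝ := Real.sqrt |x| * m with ht
      have ht0 : 0 ≤ t := by positivity
      have ht2 : t^2 = |x| * m^2 := by rw [ht, mul_pow, Real.sq_sqrt (abs_nonneg x)]
      have htge : 2 ≤ t := by nlinarith
      have hts : t^s = |x|^(n+2) * m^s := by
        rw [ht, mul_pow, hs, show 2*n+4 = 2*(n+2) by ring, pow_mul,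
          Real.sq_sqrt (abs_nonneg x)]
      have hden3 : |x|^(n+2) * m^s / (4 * (Nat.factorial s)) ≤ mysteryDen K K' x := by
        have h1 := aux_cosh_large htge s
        have h2 := den_lower K K' m hm hm0.le x
        rw [hts] at h1
        linarith
      have hx2 : 16 ≤ x^2 * m^4 := by
        have e : x^2 * m^4 = (|x| * m^2)^2 := by rw [mul_pow, sq_abs]; ring
        rw [e]; nlinarith [sq_nonneg (|x| * m^2 - 4)]
      have hLHS : |x|^n * (1 + x^2) ≤ ((16 + m^4)/16) * |x|^(n+2) := by
        have hxx : |x|^(n+2) = |x|^n * x^2 := by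
          rw [pow_add, sq_abs]
        rw [hxx]
        rw [div_mul_eq_mul_div, le_div_iff₀ (by norm_num : (0:ℝ) < 16)]
        have hpn : 0 ≤ |x|^n := pow_nonneg (abs_nonneg x) n
        nlinarith [mul_le_mul_of_nonneg_left hx2 hpn]
      have hkey : cC * (|x|^(n+2) * m^s / (4 * (Nat.factorial s)))
          = ((16 + m^4)/16) * |x|^(n+2) := by
        rw [hcC]
        have hfac : (0:ℝ) < (Nat.factorial s) := by positivity
        have hms : (0:ℝ) < m^s := by positivity
        field_simp
      calc |x|^n * (1 + x^2) ≤ ((16 + m^4)/16) * |x|^(n+2) := hLHS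
      _ = cC * (|x|^(n+2) * m^s / (4 * (Nat.factorial s))) := hkey.symm
      _ ≤ cC * mysteryDen K K' x := mul_le_mul_of_nonneg_left hden3 hcC0
      _ ≤ max 2 (max cB cC) * mysteryDen K K' x :=
          mul_le_mul_of_nonneg_right ((le_max_right cB cC).trans (le_max_right _ _)) hden0
  -- measurability
  have hmden : Measurable (mysteryDen K K') := by
    unfold mysteryDen
    exact Measurable.ite (measurableSet_le measurable_const measurable_id)
      (by fun_prop) (by fun_prop)
  have hmeas : AEStronglyMeasurable (fun x : ℝ => |x| ^ n / mysteryDen K K' x) volume :=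
    (((measurable_abs.pow_const n).div hmden)).aestronglyMeasurable
  -- comparison
  have hInt : Integrable (fun x : ℝ => C * (1 + x^2)⁻¹) :=
    integrable_inv_one_add_sq.const_mul C
  refine hInt.mono' hmeas ?_
  filter_upwards with x
  have hdpos := hdenpos x
  have h1x : (0:ℝ) < 1 + x^2 := by positivity
  rw [Real.norm_eq_abs, abs_of_nonneg (div_nonneg (pow_nonneg (abs_nonneg x) n) hdpos.le)]
  calc |x|^n / mysteryDen K K' x ≤ C / (1 + x^2) := by
        rw [div_le_div_iff₀ hdpos h1x]; linarith [hC x]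
  _ = C * (1 + x^2)⁻¹ := by rw [div_eq_mul_inv]
end

section
/- Define f(z) = sin(vz(1+τ))/(cos(z(1+τ))·cos(z(1−τ))) for fixed v ∈ (−1,1) and τ = iK'/K, K,K' > 0. Then along the contour L = {iy : y ≥ 0} ∪ {x : x ≥ 0}, f(z) decays exponentially: there exist constants C, c > 0 such that |f(z)| ≤ C·exp(−c|z|) for all z ∈ L with |z| sufficiently large. -/
open Real

lemma my_abs_sin_le (z : ℂ) : ‖Complex.sin z‖ ≤ Real.exp |z.im| := by
  rw [Complex.sin_eq]
  refine (norm_add_le _ _).trans ?_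
  simp only [norm_mul, ← Complex.ofReal_sin, ← Complex.ofReal_cos, ← Complex.ofReal_sinh,
    ← Complex.ofReal_cosh, Complex.norm_real, Real.norm_eq_abs, Complex.norm_I, mul_one]
  have h1 : |Real.sin z.re| ≤ 1 := Real.abs_sin_le_one z.re
  have h2 : |Real.cos z.re| ≤ 1 := Real.abs_cos_le_one z.re
  have h3 : |Real.cosh z.im| = Real.cosh |z.im| := by
    rw [abs_of_pos (Real.cosh_pos _), Real.cosh_abs]
  have h4 : |Real.sinh z.im| = Real.sinh |z.im| := Real.abs_sinh z.im
  have h5 : Real.cosh |z.im| + Real.sinh |z.im| = Real.exp |z.im| := Real.cosh_add_sinh _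
  have hc : 0 ≤ Real.cosh |z.im| := (Real.cosh_pos _).le
  have hs : 0 ≤ Real.sinh |z.im| := Real.sinh_nonneg_iff.2 (abs_nonneg _)
  calc |Real.sin z.re| * |Real.cosh z.im| + |Real.cos z.re| * |Real.sinh z.im|
      ≤ 1 * Real.cosh |z.im| + 1 * Real.sinh |z.im| := by
        rw [h3, h4]; gcongr
    _ = Real.exp |z.im| := by rw [one_mul, one_mul, h5]

lemma my_sinh_le_abs_cos (z : ℂ) : Real.sinh |z.im| ≤ ‖Complex.cos z‖ := by
  have h := Complex.cos_eq z
  rw [← Complex.ofReal_cos, ← Complex.ofReal_cosh, ← Complex.ofReal_sin,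
    ← Complex.ofReal_sinh] at h
  have h2 : Complex.cos z = ((Real.cos z.re * Real.cosh z.im : ℝ) : ℂ) -
      ((Real.sin z.re * Real.sinh z.im : ℝ) : ℂ) * Complex.I := by rw [h]; push_cast; ring
  have hre : (Complex.cos z).re = Real.cos z.re * Real.cosh z.im := by
    rw [h2]
    simp only [Complex.sub_re, Complex.ofReal_re, Complex.mul_re, Complex.I_re,
      Complex.I_im, Complex.ofReal_im]
    ring
  have him : (Complex.cos z).im = -(Real.sin z.re * Real.sinh z.im) := by
    rw [h2]
    simp only [Complex.sub_im, Complex.ofReal_im, Complex.mul_im, Complex.I_re,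
      Complex.I_im, Complex.ofReal_re]
    ring
  have hsq : (‖Complex.cos z‖)^2 =
      (Real.cos z.re * Real.cosh z.im)^2 + (Real.sin z.re * Real.sinh z.im)^2 := by
    rw [Complex.sq_norm, Complex.normSq_apply, hre, him]
    ring
  have h1 : Real.sin z.re ^ 2 + Real.cos z.re ^ 2 = 1 := Real.sin_sq_add_cos_sq _
  have h2 : Real.cosh z.im ^ 2 = Real.sinh z.im ^ 2 + 1 := Real.cosh_sq _
  have h3 : Real.sinh |z.im| = |Real.sinh z.im| := (Real.abs_sinh z.im).symm
  have h4 : (0:ℝ) ≤ ‖Complex.cos z‖ := norm_nonneg _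
  rw [h3]
  nlinarith [abs_nonneg (Real.sinh z.im), sq_abs (Real.sinh z.im), sq_nonneg (Real.cos z.re)]

lemma my_exp_div_le_sinh {y : ℝ} (hy : 1 ≤ y) : Real.exp y / 4 ≤ Real.sinh y := by
  rw [Real.sinh_eq]
  have h1 : Real.exp (-y) ≤ Real.exp y / 2 := by
    have : Real.exp (-y) ≤ 1 := Real.exp_le_one_iff.2 (by linarith)
    have : (2:ℝ) ≤ Real.exp y := by
      calc (2:ℝ) ≤ Real.exp 1 := by
            have := Real.add_one_le_exp 1; linarith
        _ ≤ Real.exp y := Real.exp_le_exp.2 hy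
    nlinarith [Real.exp_pos (-y), Real.exp_pos y, Real.exp_neg y,
      mul_pos (Real.exp_pos y) (Real.exp_pos (-y))]
  linarith

lemma my_key (v : ℝ) (hv : |v| < 1) (w1 w2 w3 : ℂ) (s : ℝ) (hs : 1 ≤ s)
    (h1 : |w1.im| ≤ |v| * s) (h2 : s ≤ |w2.im|) (h3 : s ≤ |w3.im|) :
    ‖Complex.sin w1 / (Complex.cos w2 * Complex.cos w3)‖ ≤
      16 * Real.exp (-(2 - |v|) * s) := by
  have hes : (0:ℝ) < Real.exp s := Real.exp_pos _
  have hb2 : Real.exp s / 4 ≤ ‖Complex.cos w2‖ := by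
    calc Real.exp s / 4 ≤ Real.sinh s := my_exp_div_le_sinh hs
      _ ≤ Real.sinh |w2.im| := by
          exact Real.sinh_le_sinh.2 h2
      _ ≤ _ := my_sinh_le_abs_cos w2
  have hb3 : Real.exp s / 4 ≤ ‖Complex.cos w3‖ := by
    calc Real.exp s / 4 ≤ Real.sinh s := my_exp_div_le_sinh hs
      _ ≤ Real.sinh |w3.im| := Real.sinh_le_sinh.2 h3
      _ ≤ _ := my_sinh_le_abs_cos w3
  have hnum : ‖Complex.sin w1‖ ≤ Real.exp (|v| * s) :=
    (my_abs_sin_le w1).trans (Real.exp_le_exp.2 h1)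
  have hden : Real.exp s / 4 * (Real.exp s / 4) ≤
      ‖Complex.cos w2 * Complex.cos w3‖ := by
    rw [norm_mul]
    exact mul_le_mul hb2 hb3 (by positivity) (norm_nonneg _)
  have hdpos : (0:ℝ) < Real.exp s / 4 * (Real.exp s / 4) := by positivity
  rw [norm_div]
  calc ‖Complex.sin w1‖ / ‖Complex.cos w2 * Complex.cos w3‖
      ≤ Real.exp (|v| * s) / (Real.exp s / 4 * (Real.exp s / 4)) := by
        exact div_le_div₀ (Real.exp_nonneg _) hnum hdpos hden
    _ = 16 * Real.exp (-(2 - |v|) * s) := by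
        have e1 : Real.exp (|v| * s) =
            16 * Real.exp (-(2 - |v|) * s) * (Real.exp s / 4 * (Real.exp s / 4)) := by
          rw [show |v| * s = -(2 - |v|) * s + s + s by ring, Real.exp_add, Real.exp_add]
          ring
        rw [div_eq_iff (by positivity)]
        exact e1

theorem integrand_exponential_decay (K K' : ℝ) (hK : 0 < K) (hK' : 0 < K')
    (τ : ℂ) (hτ : τ = Complex.I * K' / K) (v : ℝ) (hv : v ∈ Set.Ioo (-1 : ℝ) 1)
    (f : ℂ → ℂ)
    (hf : f = fun z => Complex.sin (v * z * (1 + τ)) /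
      (Complex.cos (z * (1 + τ)) * Complex.cos (z * (1 - τ)))) :
    ∃ C c R : ℝ, 0 < C ∧ 0 < c ∧
      ∀ z : ℂ, (∃ y : ℝ, 0 ≤ y ∧ (z = y ∨ z = y * Complex.I)) →
        R ≤ ‖z‖ →
        ‖f z‖ ≤ C * Real.exp (-c * ‖z‖) := by
  obtain ⟨hv1, hv2⟩ := hv
  have hva : |v| < 1 := abs_lt.2 ⟨hv1, hv2⟩
  set t : ℝ := K' / K with htdef
  have ht : 0 < t := div_pos hK' hK
  have hτ' : τ = ((t : ℝ) : ℂ) * Complex.I := by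
    rw [hτ, htdef]; push_cast; ring
  refine ⟨16, (2 - |v|) * min t 1, max (1/t) 1, by norm_num, ?_, ?_⟩
  · exact mul_pos (by linarith) (lt_min ht one_pos)
  · rintro z ⟨y, hy, hz | hz⟩ hR
    · -- z = y (real axis)
      have habs : ‖z‖ = y := by rw [hz, Complex.norm_real, Real.norm_eq_abs, abs_of_nonneg hy]
      rw [habs] at hR
      have hyt : 1 ≤ y * t := by
        have h1 : 1 / t ≤ y := le_trans (le_max_left _ _) hR
        rw [div_le_iff₀ ht] at h1
        linarith
      have hyt0 : (0:ℝ) ≤ y * t := by linarith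
      have e1 : (v : ℂ) * z * (1 + τ) = ((v*y : ℝ) : ℂ) + ((v*(y*t) : ℝ) : ℂ) * Complex.I := by
        rw [hz, hτ']; push_cast; ring
      have e2 : z * (1 + τ) = ((y : ℝ) : ℂ) + ((y*t : ℝ) : ℂ) * Complex.I := by
        rw [hz, hτ']; push_cast; ring
      have e3 : z * (1 - τ) = ((y : ℝ) : ℂ) + ((-(y*t) : ℝ) : ℂ) * Complex.I := by
        rw [hz, hτ']; push_cast; ring
      have i1 : ((v : ℂ) * z * (1 + τ)).im = v * (y*t) := by rw [e1]; simp
      have i2 : (z * (1 + τ)).im = y * t := by rw [e2]; simp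
      have i3 : (z * (1 - τ)).im = -(y * t) := by rw [e3]; simp
      have key := my_key v hva ((v : ℂ) * z * (1 + τ)) (z * (1 + τ)) (z * (1 - τ)) (y*t) hyt
        (le_of_eq (by rw [i1, abs_mul, abs_of_nonneg hyt0]))
        (le_of_eq (by rw [i2, abs_of_nonneg hyt0]))
        (le_of_eq (by rw [i3, abs_neg, abs_of_nonneg hyt0]))
      simp only [hf]
      refine key.trans ?_
      rw [habs]
      refine mul_le_mul_of_nonneg_left (Real.exp_le_exp.2 ?_) (by norm_num)
      nlinarith [mul_nonneg (mul_nonneg (sub_nonneg.2 (min_le_left t 1))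
        (by linarith : (0:ℝ) ≤ 2 - |v|)) hy]
    · -- z = y * I (imaginary axis)
      have habs : ‖z‖ = y := by
        rw [hz, norm_mul, Complex.norm_real, Complex.norm_I, mul_one, Real.norm_eq_abs, abs_of_nonneg hy]
      rw [habs] at hR
      have hy1 : 1 ≤ y := le_trans (le_max_right _ _) hR
      have e1 : (v : ℂ) * z * (1 + τ) = ((-(v*(y*t)) : ℝ) : ℂ) + ((v*y : ℝ) : ℂ) * Complex.I := by
        rw [hz, hτ']; push_cast; ring_nf; rw [Complex.I_sq]; push_cast; ring
      have e2 : z * (1 + τ) = ((-(y*t) : ℝ) : ℂ) + ((y : ℝ) : ℂ) * Complex.I := by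
        rw [hz, hτ']; push_cast; ring_nf; rw [Complex.I_sq]; push_cast; ring
      have e3 : z * (1 - τ) = ((y*t : ℝ) : ℂ) + ((y : ℝ) : ℂ) * Complex.I := by
        rw [hz, hτ']; push_cast; ring_nf; rw [Complex.I_sq]; push_cast; ring
      have i1 : ((v : ℂ) * z * (1 + τ)).im = v * y := by rw [e1]; simp
      have i2 : (z * (1 + τ)).im = y := by rw [e2]; simp
      have i3 : (z * (1 - τ)).im = y := by rw [e3]; simp
      have key := my_key v hva ((v : ℂ) * z * (1 + τ)) (z * (1 + τ)) (z * (1 - τ)) y hy1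
        (le_of_eq (by rw [i1, abs_mul, abs_of_nonneg hy]))
        (le_of_eq (by rw [i2, abs_of_nonneg hy]))
        (le_of_eq (by rw [i3, abs_of_nonneg hy]))
      simp only [hf]
      refine key.trans ?_
      rw [habs]
      refine mul_le_mul_of_nonneg_left (Real.exp_le_exp.2 ?_) (by norm_num)
      nlinarith [mul_nonneg (mul_nonneg (sub_nonneg.2 (min_le_right t 1))
        (by linarith : (0:ℝ) ≤ 2 - |v|)) hy]
end

section
/- Let t ∈ ℝ, γ > 0, k ∈ (0,1), k' = √(1−k²), K = K(k), K' = K(k'). Define D(x) = −(4/π) sin(√x K/2) sinh(√x K'/2) and B(x) = (2/π) ln(k/k') sin(√x K/2) sinh(√x K'/2) + cos(√x K/2) cosh(√x K'/2). If C = (2/π)ln(k/k'), γ* = 4/(π(1+C²)), t* = −Cγ*, then for all real x: (γ*/π)/((D(x)−t*B(x))² + (γ*)²B(x)²) = (1/2)/(cos(√x K) + cosh(√x K')). -/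
open Real

/-- The real-valued function `sin(√x K/2)·sinh(√x K'/2)`, where for `x < 0`
one takes `√x = i√(-x)` (so that the product is again real). -/
noncomputable def sinSinh (K K' x : ℝ) : ℝ :=
  if 0 ≤ x then Real.sin (Real.sqrt x * K / 2) * Real.sinh (Real.sqrt x * K' / 2)
  else -(Real.sinh (Real.sqrt (-x) * K / 2) * Real.sin (Real.sqrt (-x) * K' / 2))

/-- The real-valued function `cos(√x K/2)·cosh(√x K'/2)`, where for `x < 0`
one takes `√x = i√(-x)`. -/
noncomputable def cosCosh (K K' x : ℝ) : ℝ :=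
  if 0 ≤ x then Real.cos (Real.sqrt x * K / 2) * Real.cosh (Real.sqrt x * K' / 2)
  else Real.cosh (Real.sqrt (-x) * K / 2) * Real.cos (Real.sqrt (-x) * K' / 2)

theorem nevanlinna_weight_eq_mystery_density
    (t γ : ℝ) (hγ : 0 < γ) (k : ℝ) (hk : k ∈ Set.Ioo (0:ℝ) 1)
    (k' K K' : ℝ) (hk' : k' = Real.sqrt (1 - k^2)) (hK : K = ellK k) (hK' : K' = ellK k')
    (D B : ℝ → ℝ)
    (hD : D = fun x => -(4 / π) * sinSinh K K' x)
    (hB : B = fun x => (2 / π) * Real.log (k / k') * sinSinh K K' x + cosCosh K K' x)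
    (C γs ts : ℝ)
    (hC : C = (2 / π) * Real.log (k / k'))
    (hγs : γs = 4 / (π * (1 + C^2)))
    (hts : ts = -C * γs) :
    ∀ x : ℝ,
      (γs / π) / ((D x - ts * B x)^2 + γs^2 * (B x)^2) =
        (1/2) / mysteryDen K K' x := by
  intro x
  have hπ := Real.pi_pos
  have h1C : (0:ℝ) < 1 + C^2 := by positivity
  have hγs' : γs * (π * (1 + C^2)) = 4 := by
    rw [hγs]; field_simp
  set s := sinSinh K K' x with hs
  set c := cosCosh K K' x with hc
  have half1 : ∀ a b : ℝ, Real.cos (2*a) + Real.cosh (2*b)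
      = 2 * ((Real.sin a * Real.sinh b)^2 + (Real.cos a * Real.cosh b)^2) := by
    intro a b
    rw [Real.cos_two_mul, Real.cosh_two_mul]
    linear_combination (-2 * Real.sinh b ^ 2) * Real.sin_sq_add_cos_sq a
      + (1 - 2 * Real.cos a ^ 2) * Real.cosh_sq_sub_sinh_sq b
  have half2 : ∀ a b : ℝ, Real.cosh (2*a) + Real.cos (2*b)
      = 2 * ((-(Real.sinh a * Real.sin b))^2 + (Real.cosh a * Real.cos b)^2) := by
    intro a b
    rw [Real.cos_two_mul, Real.cosh_two_mul]
    linear_combination (-2 * Real.sinh a ^ 2) * Real.sin_sq_add_cos_sq b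
      + (1 - 2 * Real.cos b ^ 2) * Real.cosh_sq_sub_sinh_sq a
  have hden : mysteryDen K K' x = 2 * (s^2 + c^2) := by
    rw [hs, hc]
    unfold mysteryDen sinSinh cosCosh
    split_ifs with h
    · have e1 : Real.sqrt x * K = 2 * (Real.sqrt x * K / 2) := by ring
      have e2 : Real.sqrt x * K' = 2 * (Real.sqrt x * K' / 2) := by ring
      rw [e1, e2, half1]; ring_nf
    · have e1 : Real.sqrt (-x) * K = 2 * (Real.sqrt (-x) * K / 2) := by ring
      have e2 : Real.sqrt (-x) * K' = 2 * (Real.sqrt (-x) * K' / 2) := by ring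
      rw [e1, e2, half2]; ring_nf
  have hBx : B x = C * s + c := by rw [hB, hC, hs, hc]
  have hDx : D x = -(4 / π) * s := by rw [hD, hs]
  have h4 : 4 / π = γs * (1 + C^2) := by
    rw [hγs]; field_simp
  have hnum : (D x - ts * B x)^2 + γs^2 * (B x)^2
      = γs^2 * (1 + C^2) * (s^2 + c^2) := by
    rw [hDx, hBx, hts, h4]; ring
  rw [hnum, hden]
  have key2 : γs / π / (γs^2 * (1 + C^2)) = 1/4 := by
    rw [hγs]; field_simp
  rw [← div_div] at key2
  rw [← div_div, ← div_div, key2, ← div_div]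
  norm_num
end
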